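/- Let S be a compact metric space and suppose to each s ∈ S is assigned a pair of bounded operators D_s : X₁ → Y₁ and C_s : X₁ → Y₂ between Banach spaces, depending continuously on s in operator norm. Let X₀ be a Banach space with a continuous injection X₁ → X₀. Suppose that for each s ∈ S there is c_s > 0 with ‖w‖_{X₁} ≤ c_s(‖D_s w‖_{Y₁} + ‖w‖_{X₀} + ‖C_s w‖_{Y₂}) for all w ∈ X₁. Then there is a single constant c > 0 such that ‖w‖_{X₁} ≤ c(‖D_s w‖_{Y₁} + ‖w‖_{X₀} + ‖C_s w‖_{Y₂}) for all s ∈ S and all w ∈ X₁. -/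

import Mathlib

/-- Let `S` be a compact metric space and `s ↦ (D_s, C_s)` a norm-continuous
family of bounded operators `D_s : X₁ → Y₁`, `C_s : X₁ → Y₂` between Banach spaces, and
`ι : X₁ → X₀` a continuous injection. If for each `s` there is `c_s > 0` with
`‖w‖ ≤ c_s(‖D_s w‖ + ‖w‖_{X₀} + ‖C_s w‖)` for all `w ∈ X₁`, then a single constant
`c > 0` works for all `s ∈ S` simultaneously. -/
theorem stmt13
    {S : Type*} [MetricSpace S] [CompactSpace S]
    {X₀ X₁ Y₁ Y₂ : Type*}
    [NormedAddCommGroup X₀] [NormedSpace ℝ X₀]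
    [NormedAddCommGroup X₁] [NormedSpace ℝ X₁] [CompleteSpace X₁]
    [NormedAddCommGroup Y₁] [NormedSpace ℝ Y₁] [CompleteSpace Y₁]
    [NormedAddCommGroup Y₂] [NormedSpace ℝ Y₂] [CompleteSpace Y₂]
    (D : S → X₁ →L[ℝ] Y₁) (C : S → X₁ →L[ℝ] Y₂)
    (hD : Continuous D) (hC : Continuous C)
    (ι : X₁ →L[ℝ] X₀) (hι : Function.Injective ι)
    (hreg : ∀ s : S, ∃ c : ℝ, 0 < c ∧ ∀ w : X₁,
      ‖w‖ ≤ c * (‖D s w‖ + ‖ι w‖ + ‖C s w‖)) :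
    ∃ c : ℝ, 0 < c ∧ ∀ (s : S) (w : X₁),
      ‖w‖ ≤ c * (‖D s w‖ + ‖ι w‖ + ‖C s w‖) := by
  choose c hc hest using hreg
  -- neighborhoods on which a doubled constant works
  set U : S → Set S := fun s =>
    {t | ‖D t - D s‖ < 1 / (4 * c s)} ∩ {t | ‖C t - C s‖ < 1 / (4 * c s)} with hU
  have hUopen : ∀ s, IsOpen (U s) := by
    intro s
    apply IsOpen.inter
    · exact isOpen_lt (Continuous.norm (by continuity)) continuous_const
    · exact isOpen_lt (Continuous.norm (by continuity)) continuous_const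
  have hUmem : ∀ s, s ∈ U s := by
    intro s
    have h4 : (0:ℝ) < 1 / (4 * c s) := by have := hc s; positivity
    constructor <;>
      · simp only [Set.mem_setOf_eq, sub_self, norm_zero]; exact h4
  have hlocal : ∀ s, ∀ t ∈ U s, ∀ w : X₁,
      ‖w‖ ≤ 2 * c s * (‖D t w‖ + ‖ι w‖ + ‖C t w‖) := by
    intro s t ht w
    obtain ⟨htD, htC⟩ := ht
    have hcs := hc s
    have h4 : 0 < 4 * c s := by positivity
    have hDw : ‖D s w‖ ≤ ‖D t w‖ + (1 / (4 * c s)) * ‖w‖ := by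
      have : ‖D s w - D t w‖ ≤ (1 / (4 * c s)) * ‖w‖ := by
        have := (D t - D s).le_opNorm w
        simp only [ContinuousLinearMap.sub_apply] at this
        calc ‖D s w - D t w‖ = ‖D t w - D s w‖ := norm_sub_rev _ _
          _ ≤ ‖D t - D s‖ * ‖w‖ := this
          _ ≤ (1 / (4 * c s)) * ‖w‖ := by
              exact mul_le_mul_of_nonneg_right (le_of_lt htD) (norm_nonneg _)
      calc ‖D s w‖ ≤ ‖D t w‖ + ‖D s w - D t w‖ := norm_le_insert' _ _
        _ ≤ _ := by linarith
    have hCw : ‖C s w‖ ≤ ‖C t w‖ + (1 / (4 * c s)) * ‖w‖ := by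
      have : ‖C s w - C t w‖ ≤ (1 / (4 * c s)) * ‖w‖ := by
        have := (C t - C s).le_opNorm w
        simp only [ContinuousLinearMap.sub_apply] at this
        calc ‖C s w - C t w‖ = ‖C t w - C s w‖ := norm_sub_rev _ _
          _ ≤ ‖C t - C s‖ * ‖w‖ := this
          _ ≤ (1 / (4 * c s)) * ‖w‖ := by
              exact mul_le_mul_of_nonneg_right (le_of_lt htC) (norm_nonneg _)
      calc ‖C s w‖ ≤ ‖C t w‖ + ‖C s w - C t w‖ := norm_le_insert' _ _
        _ ≤ _ := by linarith
    have h1 := hest s w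
    have key : ‖w‖ ≤ c s * (‖D t w‖ + ‖ι w‖ + ‖C t w‖) + 2 * (c s * (1 / (4 * c s))) * ‖w‖ := by
      calc ‖w‖ ≤ c s * (‖D s w‖ + ‖ι w‖ + ‖C s w‖) := h1
        _ ≤ c s * ((‖D t w‖ + (1 / (4 * c s)) * ‖w‖) + ‖ι w‖ +
              (‖C t w‖ + (1 / (4 * c s)) * ‖w‖)) := by
            apply mul_le_mul_of_nonneg_left _ (le_of_lt hcs)
            linarith
        _ = _ := by ring
    have hhalf : c s * (1 / (4 * c s)) = 1 / 4 := by
      field_simp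
    rw [hhalf] at key
    linarith
  -- finite subcover
  obtain ⟨I, hI⟩ := isCompact_univ.elim_finite_subcover U hUopen
    (fun s _ => Set.mem_iUnion.2 ⟨s, hUmem s⟩)
  refine ⟨1 + ∑ s ∈ I, 2 * c s, ?_, ?_⟩
  · have : (0:ℝ) ≤ ∑ s ∈ I, 2 * c s :=
      Finset.sum_nonneg fun i _ => by have := hc i; linarith
    linarith
  · intro t w
    obtain ⟨s, hsI, hts⟩ := Set.mem_iUnion₂.1 (hI (Set.mem_univ t))
    have h1 := hlocal s t hts w
    have hterm : ∀ i : S, (0:ℝ) ≤ 2 * c i := fun i => by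
      have := hc i; linarith
    have h2 : 2 * c s ≤ 1 + ∑ s ∈ I, 2 * c s := by
      have hle : 2 * c s ≤ ∑ s ∈ I, 2 * c s :=
        Finset.single_le_sum (f := fun i => 2 * c i) (fun i _ => hterm i) hsI
      linarith
    have hA : (0:ℝ) ≤ ‖D t w‖ + ‖ι w‖ + ‖C t w‖ := by positivity
    calc ‖w‖ ≤ 2 * c s * (‖D t w‖ + ‖ι w‖ + ‖C t w‖) := h1
      _ ≤ _ := mul_le_mul_of_nonneg_right h2 hA
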